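/- Let Σ be a positive definite real p×p matrix, let P = Σ⁻¹, and let S be the diagonal matrix with entries S_{jj} = 1/P_{jj}. Then the 2p×2p block matrix [[Σ, Σ−S],[Σ−S, Σ]] is positive semidefinite if and only if 2·Diag(P) − P is positive semidefinite. -/

import Mathlib

open Matrix

/-- For the conditional independence knockoff choice `s_j = 1/P_jj` with `P = Σ⁻¹`,
the extended covariance matrix is PSD iff `2·Diag(P) − P ⪰ 0`. -/
theorem stmt3 {p : ℕ} (Sigma : Matrix (Fin p) (Fin p) ℝ) (hSigma : Sigma.PosDef)
    (P : Matrix (Fin p) (Fin p) ℝ) (hP : P = Sigma⁻¹)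
    (S : Matrix (Fin p) (Fin p) ℝ) (hS : S = Matrix.diagonal (fun j => (P j j)⁻¹)) :
    (Matrix.fromBlocks Sigma (Sigma - S) (Sigma - S) Sigma).PosSemidef ↔
      ((2 : ℝ) • Matrix.diagonal (fun j => P j j) - P).PosSemidef := by
  have hPpd : P.PosDef := hP ▸ hSigma.inv
  -- diagonal entries of P are positive
  have hdiag : ∀ j, 0 < P j j := fun j => by
    exact hPpd.diag_pos
  have hdne : ∀ j, P j j ≠ 0 := fun j => (hdiag j).ne'
  set D : Matrix (Fin p) (Fin p) ℝ := Matrix.diagonal (fun j => P j j) with hD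
  have hSD : S * D = 1 := by
    rw [hS, hD, diagonal_mul_diagonal,
      show (fun j => (P j j)⁻¹ * P j j) = fun _ => (1:ℝ) from funext fun j => inv_mul_cancel₀ (hdne j),
      diagonal_one]
  have hDS : D * S = 1 := by
    rw [hD, hS, diagonal_mul_diagonal,
      show (fun j => P j j * (P j j)⁻¹) = fun _ => (1:ℝ) from funext fun j => mul_inv_cancel₀ (hdne j),
      diagonal_one]
  have hSherm : Sᴴ = S := by rw [hS, diagonal_conjTranspose]; simp
  have hSigmaP : Sigma * P = 1 := by
    rw [hP]; exact mul_nonsing_inv Sigma hSigma.det_pos.ne'.isUnit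
  have hPSigma : P * Sigma = 1 := by
    rw [hP]; exact nonsing_inv_mul Sigma hSigma.det_pos.ne'.isUnit
  haveI : Invertible Sigma := invertibleOfIsUnitDet Sigma hSigma.det_pos.ne'.isUnit
  have hkey : Sigma - (Sigma - S)ᴴ * Sigma⁻¹ * (Sigma - S)
      = S * ((2 : ℝ) • D - P) * S := by
    rw [← hP]
    have hherm : (Sigma - S)ᴴ = Sigma - S := by
      rw [conjTranspose_sub, hSherm, hSigma.isHermitian.eq]
    rw [hherm]
    have e1 : (Sigma - S) * P = 1 - S * P := by rw [sub_mul, hSigmaP]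
    have e2 : (Sigma - S) * P * (Sigma - S) = Sigma - (S + S) + S * P * S := by
      rw [e1, sub_mul, one_mul, mul_sub, Matrix.mul_assoc S P Sigma, hPSigma, Matrix.mul_one]
      abel
    have e3 : S * ((2 : ℝ) • D - P) * S = (S + S) - S * P * S := by
      rw [mul_sub, mul_smul_comm, hSD, sub_mul, smul_mul_assoc, one_mul, two_smul]
    rw [e2, e3]
    abel
  have hblock : Matrix.fromBlocks Sigma (Sigma - S) (Sigma - S) Sigma
      = Matrix.fromBlocks Sigma (Sigma - S) (Sigma - S)ᴴ Sigma := by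
    rw [conjTranspose_sub, hSherm, hSigma.isHermitian.eq]
  rw [hblock, PosDef.fromBlocks₁₁ _ _ hSigma, hkey]
  constructor
  · intro h
    have := h.mul_mul_conjTranspose_same D
    rwa [show D * (S * ((2:ℝ) • D - P) * S) * Dᴴ = (2:ℝ) • D - P by
      have hDherm : Dᴴ = D := by rw [hD, diagonal_conjTranspose]; simp
      rw [hDherm, ← mul_assoc, ← mul_assoc, hDS, one_mul, mul_assoc, hSD, mul_one]] at this
  · intro h
    have := h.mul_mul_conjTranspose_same S
    rwa [hSherm] at this
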